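/- Let F = {0011, 0110, 1100, 1001, 010101, 101010, 0001011101, 1011101000, 101110111011101, 010001000100010}. Every bi-infinite binary word that contains no factor of exponent ≥ 4 and avoids every word of F as a factor has exactly the same set of finite factors as g(f) or as the complement of g(f), where g is the morphism 0→01, 1→11 and f is the Fibonacci word. -/

import Mathlib

/-- Bitwise complement of a binary word. -/
def comp (x : List Bool) : List Bool := x.map (fun b => !b)

/-- An antisquare is a nonempty word of the form `y ++ comp y`. -/
def Antisquare (x : List Bool) : Prop := ∃ y : List Bool, y ≠ [] ∧ x = y ++ comp y

/-- `w` has period `p ≥ 1` if `w[i] = w[i+p]` whenever both indices are valid. -/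
def HasPeriod (w : List Bool) (p : ℕ) : Prop :=
  1 ≤ p ∧ ∀ i, i + p < w.length → w.getD i false = w.getD (i + p) false

/-- The exponent of a finite word: its length divided by its least period. -/
noncomputable def exponent (w : List Bool) : ℝ :=
  (w.length : ℝ) / ((sInf {p : ℕ | HasPeriod w p} : ℕ) : ℝ)

/-- `u` is a factor of the right-infinite word `w : ℕ → Bool`. -/
def FactorInf (u : List Bool) (w : ℕ → Bool) : Prop :=
  ∃ i : ℕ, u = (List.range u.length).map (fun t => w (i + t))

/-- `u` is a factor of the bi-infinite word `w : ℤ → Bool`. -/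
def FactorBi (u : List Bool) (w : ℤ → Bool) : Prop :=
  ∃ i : ℤ, u = (List.range u.length).map (fun t => w (i + (t : ℤ)))

/-- A binary word is good if its only antisquare factors are `01` and `10`. -/
def Good (w : List Bool) : Prop :=
  ∀ u, u <:+: w → Antisquare u → u = [false, true] ∨ u = [true, false]

/-- Apply a morphism (given on letters) to a word. -/
def applyM (m : Bool → List Bool) (w : List Bool) : List Bool := (w.map m).flatten

/-- The Fibonacci morphism: 0 → 01, 1 → 0. -/
def fibM : Bool → List Bool := fun b => if b then [false] else [false, true]

/-- Iterates of the Fibonacci morphism starting from 0. -/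
def fibIter : ℕ → List Bool
  | 0 => [false]
  | n + 1 => applyM fibM (fibIter n)

/-- The morphism g: 0 → 01, 1 → 11. -/
def gM : Bool → List Bool := fun b => if b then [true, true] else [false, true]

/-- The factors of g(f), where f is the Fibonacci word: since each `fibIter n` is a
prefix of f, these are exactly the factors of some `g(fibIter n)`. -/
def GFibFactor (u : List Bool) : Prop := ∃ n, u <:+: applyM gM (fibIter n)

/-- The set F of forbidden factors:
0011, 0110, 1100, 1001, 010101, 101010, 0001011101, 1011101000,
101110111011101, 010001000100010. -/
def Fset : List (List Bool) :=
  [[false, false, true, true],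
   [false, true, true, false],
   [true, true, false, false],
   [true, false, false, true],
   [false, true, false, true, false, true],
   [true, false, true, false, true, false],
   [false, false, false, true, false, true, true, true, false, true],
   [true, false, true, true, true, false, true, false, false, false],
   [true, false, true, true, true, false, true, true, true, false, true, true, true, false, true],
   [false, true, false, false, false, true, false, false, false, true, false, false, false, true, false]]


/-! ### Section A: segments of bi-infinite words -/

lemma coeList_eq_map (l : List ℕ) : (List.flatMap (fun a : ℕ => [(a:ℤ)]) l) = l.map (fun a : ℕ => (a:ℤ)) := by
  induction l with
  | nil => rfl
  | cons x xs ih => rw [List.flatMap_cons, List.map_cons, List.singleton_append, ih]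

def seg (w : ℤ → Bool) (i : ℤ) (n : ℕ) : List Bool :=
  (List.range n).map (fun t : ℕ => w (i + (t:ℤ)))

lemma coeMap_eq_seg (w : ℤ → Bool) (i : ℤ) (n : ℕ) :
    ((List.range n).map (fun t => w (i + (t : ℤ))) : List Bool) = seg w i n := by
  show List.map _ (List.flatMap (fun a : ℕ => [(a:ℤ)]) (List.range n)) = _
  rw [coeList_eq_map, List.map_map]; rfl

lemma factorBi_iff_seg {u : List Bool} {w : ℤ → Bool} :
    FactorBi u w ↔ ∃ i, u = seg w i u.length := by
  unfold FactorBi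
  simp only [coeMap_eq_seg]

@[simp] lemma seg_length (w : ℤ → Bool) (i : ℤ) (n : ℕ) : (seg w i n).length = n := by
  rw [seg, List.length_map, List.length_range]

lemma seg_getElem (w : ℤ → Bool) (i : ℤ) {n t : ℕ} (h : t < n) :
    (seg w i n)[t]'(by simpa using h) = w (i + (t:ℤ)) := by
  simp [seg]

lemma seg_add (w : ℤ → Bool) (i : ℤ) (a b : ℕ) :
    seg w i (a+b) = seg w i a ++ seg w (i+(a:ℤ)) b := by
  apply List.ext_getElem
  · simp
  · intro t h1 h2
    simp only [seg_length, List.length_append] at h1 h2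
    rcases lt_or_ge t a with h | h
    · rw [seg_getElem w i (by omega), List.getElem_append_left (by simpa using h),
        seg_getElem w i h]
    · rw [seg_getElem w i (by omega), List.getElem_append_right (by simpa using h)]
      simp only [seg_length]
      rw [seg_getElem w _ (by omega)]
      congr 1
      have : ((t - a : ℕ) : ℤ) = (t:ℤ) - (a:ℤ) := by
        push_cast [Nat.cast_sub h]; ring
      rw [this]; ring

def PW (w : ℤ → Bool) (l : List Bool) (i : ℤ) : Prop :=
  ∀ j : ℕ, j < l.length → w (i + (j:ℤ)) = l.getD j false

lemma eq_seg_of_pw {w : ℤ → Bool} {l : List Bool} {i : ℤ} (h : PW w l i) :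
    l = seg w i l.length := by
  apply List.ext_getElem (by simp)
  intro t h1 h2
  rw [seg_getElem w i (by simpa using h2), h t h1, List.getD_eq_getElem l false h1]

lemma pw_of_eq_seg {w : ℤ → Bool} {l : List Bool} {i : ℤ} (h : l = seg w i l.length) :
    PW w l i := by
  intro j hj
  rw [List.getD_eq_getElem l false hj, List.getElem_of_eq h hj, seg_getElem w i (by simpa using hj)]

lemma factorBi_iff_pw {w : ℤ → Bool} {u : List Bool} :
    FactorBi u w ↔ ∃ i, PW w u i := by
  rw [factorBi_iff_seg]
  constructor
  · rintro ⟨i, hi⟩; exact ⟨i, pw_of_eq_seg hi⟩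
  · rintro ⟨i, hi⟩; exact ⟨i, eq_seg_of_pw hi⟩

lemma factorBi_of_infix_seg {w : ℤ → Bool} {u : List Bool} {i : ℤ} {n : ℕ}
    (h : u <:+: seg w i n) : FactorBi u w := by
  obtain ⟨t, s, hts⟩ := h
  have hlen : n = t.length + (u.length + s.length) := by
    have := congrArg List.length hts
    simp at this; omega
  rw [hlen, seg_add, seg_add, List.append_assoc] at hts
  obtain ⟨h1, h2⟩ := List.append_inj hts (by simp)
  obtain ⟨h3, _⟩ := List.append_inj h2 (by simp)
  rw [factorBi_iff_seg]
  exact ⟨i + t.length, by rw [h3]; simp⟩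

lemma seg_infix_seg (w : ℤ → Bool) {i p : ℤ} {l L : ℕ} (h1 : p ≤ i) (h2 : i + l ≤ p + L) :
    seg w i l <:+: seg w p L := by
  have ha : ((i - p).toNat : ℤ) = i - p := Int.toNat_of_nonneg (by omega)
  have hL : L = (i-p).toNat + (l + (L - (i-p).toNat - l)) := by omega
  rw [hL, seg_add, seg_add]
  have hip : p + ((i-p).toNat : ℤ) = i := by omega
  rw [hip]
  exact ⟨seg w p (i-p).toNat, seg w (i + (l:ℤ)) (L - (i-p).toNat - l), by simp⟩

lemma factorBi_mono {w : ℤ → Bool} {u v : List Bool} (h : u <:+: v) (hv : FactorBi v w) :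
    FactorBi u w := by
  rw [factorBi_iff_seg] at hv
  obtain ⟨i, hi⟩ := hv
  exact factorBi_of_infix_seg (show u <:+: seg w i v.length from hi ▸ h)

@[simp] lemma comp_length (l : List Bool) : (comp l).length = l.length := by simp [comp]

lemma comp_seg (w : ℤ → Bool) (i : ℤ) (n : ℕ) :
    comp (seg w i n) = seg (fun t => ! w t) i n := by
  simp [comp, seg, List.map_map]

@[simp] lemma comp_comp (l : List Bool) : comp (comp l) = l := by
  simp [comp, List.map_map, Function.comp_def, Bool.not_not]

lemma comp_getD {u : List Bool} {j : ℕ} (hj : j < u.length) :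
    (comp u).getD j false = !(u.getD j false) := by
  rw [List.getD_eq_getElem _ false (by simpa using hj), List.getD_eq_getElem _ false hj]
  simp [comp]

lemma factorBi_comp_iff {w : ℤ → Bool} {u : List Bool} :
    FactorBi u (fun t => ! w t) ↔ FactorBi (comp u) w := by
  rw [factorBi_iff_pw, factorBi_iff_pw]
  apply exists_congr; intro i
  constructor
  · intro h j hj
    rw [comp_length] at hj
    rw [comp_getD hj, ← h j hj, Bool.not_not]
  · intro h j hj
    have h2 := h j (by simpa using hj)
    rw [comp_getD hj] at h2
    simp only [h2, Bool.not_not]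

/-! ### Section B: morphism utilities -/

lemma applyM_cons (m : Bool → List Bool) (a : Bool) (l : List Bool) :
    applyM m (a :: l) = m a ++ applyM m l := by simp [applyM]

@[simp] lemma applyM_nil (m : Bool → List Bool) : applyM m [] = [] := rfl

lemma applyM_append (m : Bool → List Bool) (l1 l2 : List Bool) :
    applyM m (l1 ++ l2) = applyM m l1 ++ applyM m l2 := by simp [applyM]

lemma applyM_comp (m1 m2 : Bool → List Bool) (l : List Bool) :
    applyM m2 (applyM m1 l) = applyM (fun c => applyM m2 (m1 c)) l := by
  induction l with
  | nil => rfl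
  | cons a l ih => rw [applyM_cons, applyM_append, applyM_cons, ih]

lemma applyM_infix (m : Bool → List Bool) {u v : List Bool} (h : u <:+: v) :
    applyM m u <:+: applyM m v := by
  obtain ⟨t, s, hts⟩ := h
  exact ⟨applyM m t, applyM m s, by rw [← applyM_append, ← applyM_append, hts]⟩

lemma applyM_prefix (m : Bool → List Bool) {u v : List Bool} (h : u <+: v) :
    applyM m u <+: applyM m v := by
  obtain ⟨s, hs⟩ := h
  exact ⟨applyM m s, by rw [← applyM_append, hs]⟩

def sigN : ℕ → Bool → List Bool
  | 0, c => [c]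
  | n+1, c => applyM (sigN n) (fibM c)

lemma applyM_sigN_zero (l : List Bool) : applyM (sigN 0) l = l := by
  induction l with
  | nil => rfl
  | cons a l ih => rw [applyM_cons, ih]; rfl

lemma sigN_succ_false (n : ℕ) : sigN (n+1) false = sigN n false ++ sigN n true := by
  show applyM (sigN n) (fibM false) = _
  show applyM (sigN n) [false, true] = _
  rw [applyM_cons, applyM_cons, applyM_nil, List.append_nil]

lemma sigN_succ_true (n : ℕ) : sigN (n+1) true = sigN n false := by
  show applyM (sigN n) (fibM true) = _
  show applyM (sigN n) [false] = _
  rw [applyM_cons, applyM_nil, List.append_nil]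

lemma applyM_sigN (n m : ℕ) : applyM (sigN n) (fibIter m) = fibIter (m + n) := by
  induction n generalizing m with
  | zero => rw [applyM_sigN_zero, Nat.add_zero]
  | succ n ih =>
    have h1 : applyM (sigN (n+1)) (fibIter m) = applyM (fun c => applyM (sigN n) (fibM c)) (fibIter m) := rfl
    rw [h1, ← applyM_comp]
    have h2 : applyM fibM (fibIter m) = fibIter (m+1) := rfl
    rw [h2, ih (m+1)]
    congr 1
    omega

lemma sigN_false_eq_fib (n : ℕ) : sigN n false = fibIter n := by
  have h := applyM_sigN n 0
  rw [Nat.zero_add] at h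
  rw [← h]
  show sigN n false = sigN n false ++ []
  rw [List.append_nil]

lemma fib_prefix_sigN (m : ℕ) (c : Bool) : fibIter m <+: sigN (m+1) c := by
  cases c
  · rw [sigN_succ_false, sigN_false_eq_fib]
    exact ⟨sigN m true, rfl⟩
  · rw [sigN_succ_true, sigN_false_eq_fib]

lemma sigN_len_pos (n : ℕ) (c : Bool) : 1 ≤ (sigN n c).length := by
  induction n generalizing c with
  | zero => simp [sigN]
  | succ n ih =>
    cases c
    · rw [sigN_succ_false, List.length_append]
      have := ih false; omega
    · rw [sigN_succ_true]; exact ih false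

lemma sigN_len_ge (n : ℕ) (c : Bool) : n ≤ (sigN (2*n) c).length := by
  induction n generalizing c with
  | zero => omega
  | succ n ih =>
    have e : 2 * (n+1) = (2*n + 1) + 1 := by omega
    rw [e]
    cases c
    · rw [sigN_succ_false, sigN_succ_false, List.length_append, List.length_append]
      have h1 := ih false
      have h2 := sigN_len_pos (2*n) true
      omega
    · rw [sigN_succ_true, sigN_succ_false, List.length_append]
      have h1 := ih true
      have h2 : (sigN (2*n) false).length ≥ 1 := sigN_len_pos _ _
      -- need: len0(2n) + len1(2n) ≥ n+1 ; have len1(2n) ≥ n, len0 ≥ 1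
      omega

lemma applyM_gM_length (l : List Bool) : (applyM gM l).length = 2 * l.length := by
  induction l with
  | nil => rfl
  | cons a l ih =>
    rw [applyM_cons, List.length_append, ih]
    cases a <;> simp [gM] <;> omega

/-! ### Section C: embeddings of substitution images into bi-infinite words -/

def EmbM (m : Bool → List Bool) (x : ℤ → Bool) (s : ℤ → ℤ) (w : ℤ → Bool) : Prop :=
  StrictMono s ∧ ∀ k : ℤ,
    s (k+1) = s k + ((m (x k)).length : ℤ) ∧ PW w (m (x k)) (s k)

@[simp] lemma seg_zero (w : ℤ → Bool) (i : ℤ) : seg w i 0 = [] := rfl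

lemma seg_one (w : ℤ → Bool) (i : ℤ) : seg w i 1 = [w i] := by
  simp [seg, List.range_succ]

lemma applyM_singleton (m : Bool → List Bool) (c : Bool) : applyM m [c] = m c := by
  rw [applyM_cons, applyM_nil, List.append_nil]

lemma embm_chunk {m : Bool → List Bool} {x : ℤ → Bool} {s : ℤ → ℤ} {w : ℤ → Bool}
    (h : EmbM m x s w) (n : ℕ) (k : ℤ) :
    s (k + (n:ℤ)) = s k + ((applyM m (seg x k n)).length : ℤ) ∧
    seg w (s k) (applyM m (seg x k n)).length = applyM m (seg x k n) := by
  induction n with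
  | zero => simp
  | succ n ih =>
    have hsplit : seg x k (n+1) = seg x k n ++ [x (k + (n:ℤ))] := by
      rw [seg_add, seg_one]
    rw [hsplit, applyM_append, applyM_singleton]
    have hblock := h.2 (k + (n:ℤ))
    have hblist : seg w (s (k + (n:ℤ))) (m (x (k + (n:ℤ)))).length = m (x (k + (n:ℤ))) :=
      (eq_seg_of_pw hblock.2).symm
    constructor
    · have e : k + ((n:ℤ) + 1) = (k + (n:ℤ)) + 1 := by ring
      push_cast
      rw [e, hblock.1, ih.1]
      simp [List.length_append]
      ring
    · rw [List.length_append, seg_add, ih.2]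
      congr 1
      rw [← ih.1]
      exact hblist

lemma embm_trans {m1 m2 : Bool → List Bool} {a b c : ℤ → Bool} {s1 s2 : ℤ → ℤ}
    (h1 : EmbM m1 a s1 b) (h2 : EmbM m2 b s2 c) :
    EmbM (fun t => applyM m2 (m1 t)) a (fun k => s2 (s1 k)) c := by
  refine ⟨h2.1.comp h1.1, fun k => ?_⟩
  have hb : seg b (s1 k) (m1 (a k)).length = m1 (a k) := (eq_seg_of_pw (h1.2 k).2).symm
  have hc := embm_chunk h2 ((m1 (a k)).length) (s1 k)
  rw [hb] at hc
  constructor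
  · show s2 (s1 (k+1)) = s2 (s1 k) + ((applyM m2 (m1 (a k))).length : ℤ)
    rw [(h1.2 k).1, hc.1]
  · exact pw_of_eq_seg (by rw [hc.2])

lemma strictMono_gap {s : ℤ → ℤ} (hs : StrictMono s) (a : ℤ) (d : ℕ) :
    s a + (d:ℤ) ≤ s (a + (d:ℤ)) := by
  induction d with
  | zero => simp
  | succ d ih =>
    have h1 : s (a + (d:ℤ)) < s (a + (d:ℤ) + 1) := hs (by omega)
    push_cast
    have e : a + ((d:ℤ)+1) = a + (d:ℤ) + 1 := by ring
    rw [e]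
    omega

lemma covering {s : ℤ → ℤ} (hs : StrictMono s) :
    ∀ (N : ℕ) (a i : ℤ), s a ≤ i → i < s (a + (N:ℤ)) →
      ∃ j, a ≤ j ∧ j < a + (N:ℤ) ∧ s j ≤ i ∧ i < s (j+1) := by
  intro N
  induction N with
  | zero => intro a i h1 h2; simp at h2; omega
  | succ N ih =>
    intro a i h1 h2
    by_cases hlt : i < s (a+1)
    · exact ⟨a, le_refl a, by push_cast; omega, h1, hlt⟩
    · push_neg at hlt
      have e : a + ((N:ℤ)+1) = (a+1) + (N:ℤ) := by ring
      push_cast at h2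
      rw [e] at h2
      obtain ⟨j, hj1, hj2, hj3, hj4⟩ := ih (a+1) i hlt h2
      exact ⟨j, by omega, by push_cast; omega, hj3, hj4⟩

lemma exists_block {s : ℤ → ℤ} (hs : StrictMono s) (i : ℤ) :
    ∃ j, s j ≤ i ∧ i < s (j+1) := by
  set a : ℤ := min 0 (i - s 0) with ha
  have ha0 : a ≤ 0 := min_le_left _ _
  have hsa : s a ≤ i := by
    have hd : a + ((-a).toNat : ℤ) = 0 := by omega
    have := strictMono_gap hs a (-a).toNat
    rw [hd] at this
    have h2 : a ≤ i - s 0 := min_le_right _ _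
    omega
  set b : ℤ := max 0 (i - s 0 + 1) with hb
  have hb0 : (0:ℤ) ≤ b := le_max_left _ _
  have hsb : i < s b := by
    have hd : (0:ℤ) + ((b).toNat : ℤ) = b := by omega
    have := strictMono_gap hs 0 b.toNat
    rw [hd] at this
    rcases le_or_gt (i - s 0 + 1) 0 with h | h
    · have : b = 0 := by omega
      omega
    · have : b = i - s 0 + 1 := by omega
      omega
  have hab : a ≤ b := le_trans ha0 hb0
  have hN : b = a + ((b-a).toNat : ℤ) := by omega
  obtain ⟨j, _, _, hj3, hj4⟩ := covering hs (b-a).toNat a i hsa (by rw [← hN]; exact hsb)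
  exact ⟨j, hj3, hj4⟩

/-! ### Section D: desubstitution -/

def NoFP (w : ℤ → Bool) : Prop :=
  ∀ (i : ℤ) (p : ℕ), 1 ≤ p → ∃ t : ℕ, t < 3*p ∧ w (i + (t:ℤ)) ≠ w (i + (t:ℤ) + (p:ℤ))

def InvB (y : ℤ → Bool) : Prop :=
  (∀ k, ¬(y k = true ∧ y (k+1) = true)) ∧
  (∀ k, ¬(y k = false ∧ y (k+1) = false ∧ y (k+2) = false)) ∧
  (∀ k, ¬(y k = false ∧ y (k+1) = true ∧ y (k+2) = false ∧ y (k+3) = true ∧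
          y (k+4) = false ∧ y (k+5) = true ∧ y (k+6) = false)) ∧
  NoFP y

lemma bool_eq_false {b : Bool} (h : ¬ b = true) : b = false := by
  cases b; rfl; exact absurd rfl h

lemma desub {y : ℤ → Bool} (hy : InvB y) :
    ∃ (y' : ℤ → Bool) (s : ℤ → ℤ), InvB y' ∧ EmbM fibM y' s y := by
  classical
  obtain ⟨h11, h000, h7, hfp⟩ := hy
  have hz : ∃ p, y p = false := by
    by_cases h : y 0 = true
    · refine ⟨1, ?_⟩
      cases hy1 : y 1
      · rfl
      · exact absurd ⟨h, hy1⟩ (h11 0)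
    · exact ⟨0, bool_eq_false h⟩
  obtain ⟨p1, hp1⟩ := hz
  set next : ℤ → ℤ := fun p => if y (p+1) = true then p + 2 else p + 1 with hnextdef
  set prev : ℤ → ℤ := fun p => if y (p-1) = false then p - 1 else p - 2 with hprevdef
  have hnext_t : ∀ p, y (p+1) = true → next p = p + 2 := by
    intro p h; simp only [hnextdef]; rw [if_pos h]
  have hnext_f : ∀ p, y (p+1) = false → next p = p + 1 := by
    intro p h; simp only [hnextdef]; rw [if_neg (by simp [h])]
  have hprev_t : ∀ p, y (p-1) = false → prev p = p - 1 := by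
    intro p h; simp only [hprevdef]; rw [if_pos h]
  have hprev_f : ∀ p, y (p-1) = true → prev p = p - 2 := by
    intro p h; simp only [hprevdef]; rw [if_neg (by simp [h])]
  have hnext0 : ∀ p, y p = false → y (next p) = false := by
    intro p hp
    cases h1 : y (p+1)
    · rw [hnext_f p h1]; exact h1
    · rw [hnext_t p h1]
      cases h2 : y (p+2)
      · rfl
      · exact absurd ⟨h1, by rw [show p+1+1 = p+2 by ring]; exact h2⟩ (h11 (p+1))
  have hprev0 : ∀ p, y p = false → y (prev p) = false := by
    intro p hp
    cases h1 : y (p-1)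
    · rw [hprev_t p h1]; exact h1
    · rw [hprev_f p h1]
      cases h2 : y (p-2)
      · rfl
      · exact absurd ⟨h2, by rw [show p-2+1 = p-1 by ring]; exact h1⟩ (h11 (p-2))
  have hnp : ∀ p, y p = false → next (prev p) = p := by
    intro p hp
    cases h1 : y (p-1)
    · rw [hprev_t p h1, hnext_f _ (by rw [show p-1+1 = p by ring]; exact hp)]
      ring
    · rw [hprev_f p h1, hnext_t _ (by rw [show p-2+1 = p-1 by ring]; exact h1)]
      ring
  have hiterN : ∀ n : ℕ, y (next^[n] p1) = false := by
    intro n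
    induction n with
    | zero => exact hp1
    | succ n ih => rw [Function.iterate_succ_apply']; exact hnext0 _ ih
  have hiterP : ∀ n : ℕ, y (prev^[n] p1) = false := by
    intro n
    induction n with
    | zero => exact hp1
    | succ n ih => rw [Function.iterate_succ_apply']; exact hprev0 _ ih
  set s : ℤ → ℤ := fun k => if 0 ≤ k then next^[k.toNat] p1 else prev^[(-k).toNat] p1 with hsdef
  have hs0 : ∀ k, y (s k) = false := by
    intro k
    simp only [hsdef]
    by_cases h : 0 ≤ k
    · rw [if_pos h]; exact hiterN _
    · rw [if_neg h]; exact hiterP _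
  have hss : ∀ k, s (k+1) = next (s k) := by
    intro k
    rcases le_or_gt 0 k with h | h
    · simp only [hsdef]
      rw [if_pos (by omega), if_pos h, show (k+1).toNat = k.toNat + 1 by omega,
        Function.iterate_succ_apply']
    · have hk1 : k + 1 ≤ 0 := by omega
      have hsk : s k = prev (s (k+1)) := by
        simp only [hsdef]
        rw [if_neg (by omega)]
        rcases eq_or_lt_of_le hk1 with h1 | h1
        · rw [if_pos (by omega), show k = -1 by omega]
          norm_num
        · rw [if_neg (by omega), show (-k).toNat = (-(k+1)).toNat + 1 by omega,
            Function.iterate_succ_apply']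
      rw [hsk, hnp _ (hs0 (k+1))]
  have hstep : ∀ k, s (k+1) = s k + 1 ∨ (s (k+1) = s k + 2 ∧ y (s k + 1) = true) := by
    intro k
    cases h1 : y (s k + 1)
    · left; rw [hss k, hnext_f _ h1]
    · right; exact ⟨by rw [hss k, hnext_t _ h1], rfl⟩
  have hmono : StrictMono s := by
    apply strictMono_int_of_lt_succ
    intro k
    rcases hstep k with h | h
    · omega
    · omega
  set y' : ℤ → Bool := fun k => ! y (s k + 1) with hy'def
  -- block facts
  have hbt : ∀ k, y' k = true → s (k+1) = s k + 1 := by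
    intro k hk
    simp only [hy'def] at hk
    rw [hss k, hnext_f _ (by cases h : y (s k + 1); rfl; rw [h] at hk; exact absurd hk (by simp))]
  have hbf : ∀ k, y' k = false → s (k+1) = s k + 2 ∧ y (s k + 1) = true := by
    intro k hk
    simp only [hy'def] at hk
    have h1 : y (s k + 1) = true := by
      cases h : y (s k + 1); rw [h] at hk; exact absurd hk (by simp); rfl
    exact ⟨by rw [hss k, hnext_t _ h1], h1⟩
  have hlen : ∀ k, s (k+1) = s k + ((fibM (y' k)).length : ℤ) := by
    intro k
    cases h : y' k
    · rw [(hbf k h).1]; simp [fibM]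
    · rw [hbt k h]; simp [fibM]
  have hemb : EmbM fibM y' s y := by
    refine ⟨hmono, fun k => ⟨hlen k, ?_⟩⟩
    intro j hj
    have hle : (fibM (y' k)).length ≤ 2 := by cases y' k <;> simp [fibM]
    have hj2 : j < 2 := by omega
    interval_cases j
    · have hg : (fibM (y' k)).getD 0 false = false := by cases y' k <;> simp [fibM]
      rw [hg]
      simpa using hs0 k
    · cases hc : y' k
      · simp only [hc, fibM, if_neg (by simp : ¬ (false = true))]
        simpa using (hbf k hc).2
      · rw [hc] at hj
        simp [fibM] at hj
  refine ⟨y', s, ?_, hemb⟩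
  -- now InvB y'
  have hv1 : ∀ k, y' k = false → y (s k + 1) = true := fun k h => (hbf k h).2
  refine ⟨?_, ?_, ?_, ?_⟩
  · -- no 11
    rintro k ⟨h1, h2⟩
    have e1 := hbt k h1
    have e2 := hbt (k+1) h2
    rw [show k+1+1 = k+2 by ring] at e2
    apply h000 (s k)
    refine ⟨hs0 k, ?_, ?_⟩
    · rw [show s k + 1 = s (k+1) by omega]; exact hs0 _
    · rw [show s k + 2 = s (k+2) by omega]; exact hs0 _
  · -- no 000
    rintro k ⟨h1, h2, h3⟩
    have e1 := (hbf k h1).1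
    have e2 := (hbf (k+1) h2).1
    have e3 := (hbf (k+2) h3).1
    rw [show k+1+1 = k+2 by ring] at e2
    rw [show k+2+1 = k+3 by ring] at e3
    apply h7 (s k)
    refine ⟨hs0 k, hv1 k h1, ?_, ?_, ?_, ?_, ?_⟩
    · rw [show s k + 2 = s (k+1) by omega]; exact hs0 _
    · rw [show s k + 3 = s (k+1) + 1 by omega]; exact hv1 _ h2
    · rw [show s k + 4 = s (k+2) by omega]; exact hs0 _
    · rw [show s k + 5 = s (k+2) + 1 by omega]; exact hv1 _ h3
    · rw [show s k + 6 = s (k+3) by omega]; exact hs0 _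
  · -- no 0101010
    rintro k ⟨h1, h2, h3, h4, h5, h6, h7'⟩
    have e1 := (hbf k h1).1
    have e2 := hbt (k+1) h2
    have e3 := (hbf (k+2) h3).1
    have e4 := hbt (k+3) h4
    have e5 := (hbf (k+4) h5).1
    have e6 := hbt (k+5) h6
    have e7 := (hbf (k+6) h7').1
    rw [show k+1+1 = k+2 by ring] at e2
    rw [show k+2+1 = k+3 by ring] at e3
    rw [show k+3+1 = k+4 by ring] at e4
    rw [show k+4+1 = k+5 by ring] at e5
    rw [show k+5+1 = k+6 by ring] at e6
    rw [show k+6+1 = k+7 by ring] at e7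
    -- positions: s(k+1)=sk+2, s(k+2)=sk+3, s(k+3)=sk+5, s(k+4)=sk+6, s(k+5)=sk+8,
    -- s(k+6)=sk+9, s(k+7)=sk+11
    have v0 : y (s k) = false := hs0 k
    have v1 : y (s k + 1) = true := hv1 k h1
    have v2 : y (s k + 2) = false := by rw [show s k + 2 = s (k+1) by omega]; exact hs0 _
    have v3 : y (s k + 3) = false := by rw [show s k + 3 = s (k+2) by omega]; exact hs0 _
    have v4 : y (s k + 4) = true := by
      rw [show s k + 4 = s (k+2) + 1 by omega]; exact hv1 _ h3
    have v5 : y (s k + 5) = false := by rw [show s k + 5 = s (k+3) by omega]; exact hs0 _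
    have v6 : y (s k + 6) = false := by rw [show s k + 6 = s (k+4) by omega]; exact hs0 _
    have v7 : y (s k + 7) = true := by
      rw [show s k + 7 = s (k+4) + 1 by omega]; exact hv1 _ h5
    have v8 : y (s k + 8) = false := by rw [show s k + 8 = s (k+5) by omega]; exact hs0 _
    have v9 : y (s k + 9) = false := by rw [show s k + 9 = s (k+6) by omega]; exact hs0 _
    have v10 : y (s k + 10) = true := by
      rw [show s k + 10 = s (k+6) + 1 by omega]; exact hv1 _ h7'
    have v11 : y (s k + 11) = false := by rw [show s k + 11 = s (k+7) by omega]; exact hs0 _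
    obtain ⟨t, ht, hne⟩ := hfp (s k) 3 (by omega)
    apply hne
    interval_cases t <;> norm_num <;>
      simp only [show s k + 1 + 3 = s k + 4 by ring, show s k + 2 + 3 = s k + 5 by ring,
        show s k + 3 + 3 = s k + 6 by ring, show s k + 4 + 3 = s k + 7 by ring,
        show s k + 5 + 3 = s k + 8 by ring, show s k + 6 + 3 = s k + 9 by ring,
        show s k + 7 + 3 = s k + 10 by ring, show s k + 8 + 3 = s k + 11 by ring,
        v0, v1, v2, v3, v4, v5, v6, v7, v8, v9, v10, v11]
  · -- NoFP y'
    intro k p hp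
    by_contra hcon
    push_neg at hcon
    set q : ℤ := s (k + (p:ℤ)) - s k with hq
    have hq1 : (p:ℤ) ≤ q := by
      have := strictMono_gap hmono k p
      omega
    have rep : ∀ j : ℕ, j ≤ 3*p → s (k + (j:ℤ) + (p:ℤ)) = s (k + (j:ℤ)) + q := by
      intro j
      induction j with
      | zero => intro _; simp only [Nat.cast_zero, add_zero]; omega
      | succ j ih =>
        intro hj
        have hj' : j ≤ 3*p := by omega
        have hcontent : y' (k + (j:ℤ) + (p:ℤ)) = y' (k + (j:ℤ)) := by
          have := hcon j (by omega)
          rw [show k + (j:ℤ) + (p:ℤ) = k + (j:ℤ) + (p:ℤ) from rfl]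
          rw [show (k + (j:ℤ) + (p:ℤ)) = (k + (j:ℤ)) + (p:ℤ) by ring] at *
          exact this.symm
        have l1 := hlen (k + (j:ℤ) + (p:ℤ))
        have l2 := hlen (k + (j:ℤ))
        rw [hcontent] at l1
        have e1 : k + ((j:ℤ)+1) + (p:ℤ) = (k + (j:ℤ) + (p:ℤ)) + 1 := by ring
        have e2 : k + ((j:ℤ)+1) = (k + (j:ℤ)) + 1 := by ring
        push_cast
        rw [e1, e2, l1, l2, ih hj']
        ring
    have hs3 : s (k + (3*p:ℕ)) = s k + 3*q := by
      have r0 := rep 0 (by omega)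
      have rp := rep p (by omega)
      have r2p := rep (2*p) (by omega)
      push_cast at r0 rp r2p ⊢
      rw [show k + 3*(p:ℤ) = k + 2*(p:ℤ) + (p:ℤ) by ring, r2p,
        show k + 2*(p:ℤ) = k + (p:ℤ) + (p:ℤ) by ring, rp]
      simp only [add_zero] at r0
      omega
    have val : ∀ i : ℤ, s k ≤ i → i < s (k + (3*p:ℕ)) → y (i + q) = y i := by
      intro i hi1 hi2
      obtain ⟨j, hj1, hj2, hj3, hj4⟩ := covering hmono (3*p) k i hi1 (by push_cast at hi2 ⊢; exact hi2)
      have hjn : k + ((j - k).toNat : ℤ) = j := by omega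
      have hjle : (j-k).toNat ≤ 3*p := by
        have : j < k + (3*p:ℤ) := by push_cast at hj2; omega
        omega
      have hjlt : (j-k).toNat < 3*p := by
        have : j < k + (3*p:ℤ) := by push_cast at hj2; omega
        omega
      have hcj : y' (j + (p:ℤ)) = y' j := by
        have := hcon (j-k).toNat hjlt
        rw [hjn] at this
        exact this.symm
      have hsj : s (j + (p:ℤ)) = s j + q := by
        have := rep (j-k).toNat hjle
        rw [hjn] at this
        exact this
      -- offset
      set o : ℕ := (i - s j).toNat with ho
      have hoi : s j + (o:ℤ) = i := by omega
      have holt : o < (fibM (y' j)).length := by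
        have := hlen j
        omega
      have hv1' := (hemb.2 j).2 o holt
      have hv2' := (hemb.2 (j + (p:ℤ))).2 o (by rw [hcj]; exact holt)
      rw [hcj] at hv2'
      rw [hoi] at hv1'
      rw [hsj, show s j + q + (o:ℤ) = i + q by omega] at hv2'
      rw [hv1', hv2']
    have hqn : 1 ≤ q.toNat := by omega
    obtain ⟨t, ht, hne⟩ := hfp (s k) q.toNat hqn
    apply hne
    have hqq : ((q.toNat:ℕ):ℤ) = q := by omega
    rw [hqq]
    have : s k + (t:ℤ) < s (k + (3*p:ℕ)) := by
      rw [hs3]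
      have : (t:ℤ) < 3 * q := by
        have := ht
        omega
      omega
    rw [val (s k + (t:ℤ)) (by omega) this]

/-! ### Section E: the good case -/

lemma seg_two (w : ℤ → Bool) (i : ℤ) : seg w i 2 = [w i, w (i+1)] := by
  have : (2:ℕ) = 1 + 1 := rfl
  rw [this, seg_add, seg_one, seg_one]
  norm_num

lemma good_case {w : ℤ → Bool}
    (hFP : NoFP w)
    (h0110 : ∀ i:ℤ, ¬(w i = false ∧ w (i+1) = true ∧ w (i+2) = true ∧ w (i+3) = false))
    (h1001 : ∀ i:ℤ, ¬(w i = true ∧ w (i+1) = false ∧ w (i+2) = false ∧ w (i+3) = true))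
    (h010101 : ∀ i:ℤ, ¬(w i = false ∧ w (i+1) = true ∧ w (i+2) = false ∧ w (i+3) = true ∧
        w (i+4) = false ∧ w (i+5) = true))
    (h15 : ∀ i:ℤ, ¬(w i = true ∧ w (i+1) = false ∧ w (i+2) = true ∧ w (i+3) = true ∧
        w (i+4) = true ∧ w (i+5) = false ∧ w (i+6) = true ∧ w (i+7) = true ∧ w (i+8) = true ∧
        w (i+9) = false ∧ w (i+10) = true ∧ w (i+11) = true ∧ w (i+12) = true ∧
        w (i+13) = false ∧ w (i+14) = true))
    (h000 : ∀ i:ℤ, ¬(w i = false ∧ w (i+1) = false ∧ w (i+2) = false)) :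
    {u | FactorBi u w} = {u | GFibFactor u} := by
  classical
  -- no 1111
  have no1111 : ∀ i:ℤ, ¬(w i = true ∧ w (i+1) = true ∧ w (i+2) = true ∧ w (i+3) = true) := by
    rintro i ⟨a, b, c, d⟩
    obtain ⟨t, ht, hne⟩ := hFP i 1 (by omega)
    interval_cases t <;> push_cast at hne <;> apply hne
    · rw [show i + 0 + 1 = i + 1 by ring, show i + 0 = i by ring, a, b]
    · rw [show i + 1 + 1 = i + 2 by ring, b, c]
    · rw [show i + 2 + 1 = i + 3 by ring, c, d]
  -- no 00
  have no00 : ∀ i:ℤ, ¬(w i = false ∧ w (i+1) = false) := by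
    rintro i ⟨a, b⟩
    have c : w (i+2) = true := by
      cases h : w (i+2)
      · exact absurd ⟨a, b, h⟩ (h000 i)
      · rfl
    have d : w (i-1) = true := by
      cases h : w (i-1)
      · refine absurd ⟨h, ?_, ?_⟩ (h000 (i-1))
        · rw [show i-1+1 = i by ring]; exact a
        · rw [show i-1+2 = i+1 by ring]; exact b
      · rfl
    refine h1001 (i-1) ⟨d, ?_, ?_, ?_⟩
    · rw [show i-1+1 = i by ring]; exact a
    · rw [show i-1+2 = i+1 by ring]; exact b
    · rw [show i-1+3 = i+2 by ring]; exact c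
  -- a zero exists
  have exists0 : ∃ p, w p = false := by
    by_contra h
    push_neg at h
    have hT : ∀ p, w p = true := by
      intro p
      cases hp : w p
      · exact absurd hp (h p)
      · rfl
    exact no1111 0 ⟨hT 0, hT 1, hT 2, hT 3⟩
  -- parity of zeros
  have parity : ∀ (N : ℕ) (i j : ℤ), w i = false → w j = false → i ≤ j →
      j - i ≤ (N:ℤ) → 2 ∣ (j - i) := by
    intro N
    induction N with
    | zero => intro i j _ _ h1 h2; omega
    | succ N ih =>
      intro i j hi hj h1 h2
      rcases eq_or_lt_of_le h1 with he | hlt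
      · omega
      · have hi1 : w (i+1) = true := by
          cases h : w (i+1)
          · exact absurd ⟨hi, h⟩ (no00 i)
          · rfl
        have hne1 : j ≠ i + 1 := by
          intro e
          rw [e, hi1] at hj
          cases hj
        cases h2' : w (i+2)
        · have hj2 : i + 2 ≤ j := by omega
          have := ih (i+2) j h2' hj hj2 (by omega)
          omega
        · have h3 : w (i+3) = true := by
            cases h3' : w (i+3)
            · exact absurd ⟨hi, hi1, h2', h3'⟩ (h0110 i)
            · rfl
          have h4 : w (i+4) = false := by
            cases h4' : w (i+4)
            · rfl
            · refine absurd ⟨hi1, ?_, ?_, ?_⟩ (no1111 (i+1))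
              · rw [show i+1+1 = i+2 by ring]; exact h2'
              · rw [show i+1+2 = i+3 by ring]; exact h3
              · rw [show i+1+3 = i+4 by ring]; exact h4'
          have hne2 : j ≠ i + 2 := by
            intro e; rw [e, h2'] at hj; cases hj
          have hne3 : j ≠ i + 3 := by
            intro e; rw [e, h3] at hj; cases hj
          have hj4 : i + 4 ≤ j := by omega
          have := ih (i+4) j h4 hj hj4 (by omega)
          omega
  obtain ⟨p0, hp0⟩ := exists0
  set x : ℤ → Bool := fun k => w (p0 + 2*k) with hxdef
  have E1 : ∀ k : ℤ, w (p0 + 2*k + 1) = true := by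
    intro k
    cases h : w (p0 + 2*k + 1)
    · exfalso
      rcases le_total p0 (p0 + 2*k + 1) with hle | hle
      · have := parity (p0 + 2*k + 1 - p0).toNat p0 (p0+2*k+1) hp0 h hle (by omega)
        omega
      · have := parity (p0 - (p0 + 2*k + 1)).toNat (p0+2*k+1) p0 h hp0 hle (by omega)
        omega
    · rfl
  have hgLen : ∀ c, (gM c).length = 2 := by intro c; cases c <;> simp [gM]
  have hembg : EmbM gM x (fun k => p0 + 2*k) w := by
    refine ⟨?_, fun k => ⟨?_, ?_⟩⟩
    · apply strictMono_int_of_lt_succ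
      intro k
      show p0 + 2*k < p0 + 2*(k+1)
      omega
    · show p0 + 2*(k+1) = p0 + 2*k + ((gM (x k)).length : ℤ)
      rw [hgLen]
      push_cast; ring
    · intro j hj
      rw [hgLen] at hj
      interval_cases j
      · have hg : (gM (x k)).getD 0 false = x k := by cases x k <;> simp [gM]
        rw [hg]
        show w (p0 + 2*k + ((0:ℕ):ℤ)) = x k
        norm_num
        rfl
      · have hg : (gM (x k)).getD 1 false = true := by cases x k <;> simp [gM]
        rw [hg]
        show w (p0 + 2*k + ((1:ℕ):ℤ)) = true
        norm_num
        exact E1 k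
  have hx : ∀ k : ℤ, x k = w (p0 + 2*k) := fun _ => rfl
  have hInvx : InvB x := by
    refine ⟨?_, ?_, ?_, ?_⟩
    · -- no 11
      rintro k ⟨a, b⟩
      refine no1111 (p0 + 2*k) ⟨a, E1 k, ?_, ?_⟩
      · rw [show p0 + 2*k + 2 = p0 + 2*(k+1) by ring]
        exact b
      · rw [show p0 + 2*k + 3 = p0 + 2*(k+1) + 1 by ring]
        exact E1 (k+1)
    · -- no 000
      rintro k ⟨a, b, c⟩
      refine h010101 (p0 + 2*k) ⟨a, E1 k, ?_, ?_, ?_, ?_⟩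
      · rw [show p0 + 2*k + 2 = p0 + 2*(k+1) by ring]; exact b
      · rw [show p0 + 2*k + 3 = p0 + 2*(k+1) + 1 by ring]; exact E1 (k+1)
      · rw [show p0 + 2*k + 4 = p0 + 2*(k+2) by ring]; exact c
      · rw [show p0 + 2*k + 5 = p0 + 2*(k+2) + 1 by ring]; exact E1 (k+2)
    · -- no 0101010
      rintro k ⟨a1, a2, a3, a4, a5, a6, a7⟩
      refine h15 (p0 + 2*k - 1) ⟨?_, ?_, ?_, ?_, ?_, ?_, ?_, ?_, ?_, ?_, ?_, ?_, ?_, ?_, ?_⟩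
      · rw [show p0 + 2*k - 1 = p0 + 2*(k-1) + 1 by ring]; exact E1 (k-1)
      · rw [show p0 + 2*k - 1 + 1 = p0 + 2*k by ring]; exact a1
      · rw [show p0 + 2*k - 1 + 2 = p0 + 2*k + 1 by ring]; exact E1 k
      · rw [show p0 + 2*k - 1 + 3 = p0 + 2*(k+1) by ring]; exact a2
      · rw [show p0 + 2*k - 1 + 4 = p0 + 2*(k+1) + 1 by ring]; exact E1 (k+1)
      · rw [show p0 + 2*k - 1 + 5 = p0 + 2*(k+2) by ring]; exact a3
      · rw [show p0 + 2*k - 1 + 6 = p0 + 2*(k+2) + 1 by ring]; exact E1 (k+2)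
      · rw [show p0 + 2*k - 1 + 7 = p0 + 2*(k+3) by ring]; exact a4
      · rw [show p0 + 2*k - 1 + 8 = p0 + 2*(k+3) + 1 by ring]; exact E1 (k+3)
      · rw [show p0 + 2*k - 1 + 9 = p0 + 2*(k+4) by ring]; exact a5
      · rw [show p0 + 2*k - 1 + 10 = p0 + 2*(k+4) + 1 by ring]; exact E1 (k+4)
      · rw [show p0 + 2*k - 1 + 11 = p0 + 2*(k+5) by ring]; exact a6
      · rw [show p0 + 2*k - 1 + 12 = p0 + 2*(k+5) + 1 by ring]; exact E1 (k+5)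
      · rw [show p0 + 2*k - 1 + 13 = p0 + 2*(k+6) by ring]; exact a7
      · rw [show p0 + 2*k - 1 + 14 = p0 + 2*(k+6) + 1 by ring]; exact E1 (k+6)
    · -- NoFP x
      intro k p hp
      by_contra hcon
      push_neg at hcon
      obtain ⟨t, ht, hne⟩ := hFP (p0 + 2*k) (2*p) (by omega)
      rcases Nat.even_or_odd t with ⟨r, hr⟩ | ⟨r, hr⟩
      · apply hne
        have hrc : (t:ℤ) = 2*(r:ℤ) := by push_cast [hr]; ring
        rw [show p0 + 2*k + (t:ℤ) = p0 + 2*(k + (r:ℤ)) by rw [hrc]; ring]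
        rw [show p0 + 2*(k + (r:ℤ)) + ((2*p:ℕ):ℤ) = p0 + 2*(k + (r:ℤ) + (p:ℤ)) by
            push_cast; ring]
        exact hcon r (by omega)
      · apply hne
        have hrc : (t:ℤ) = 2*(r:ℤ) + 1 := by push_cast [hr]; ring
        rw [show p0 + 2*k + (t:ℤ) = p0 + 2*(k + (r:ℤ)) + 1 by rw [hrc]; ring]
        rw [show p0 + 2*(k + (r:ℤ)) + 1 + ((2*p:ℕ):ℤ) = p0 + 2*(k + (r:ℤ) + (p:ℤ)) + 1 by
            push_cast; ring]
        rw [E1 (k + (r:ℤ)), E1 (k + (r:ℤ) + (p:ℤ))]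
  -- the tower
  have tower : ∀ n : ℕ, ∃ (z : ℤ → Bool) (s : ℤ → ℤ),
      InvB z ∧ EmbM (fun c => applyM gM (sigN n c)) z s w := by
    intro n
    induction n with
    | zero =>
      refine ⟨x, fun k => p0 + 2*k, hInvx, ?_⟩
      have hfun : (fun c => applyM gM (sigN 0 c)) = gM := by
        funext c
        rw [show sigN 0 c = [c] from rfl, applyM_singleton]
      rw [hfun]
      exact hembg
    | succ n ih =>
      obtain ⟨z, s, hI, hE⟩ := ih
      obtain ⟨z', s', hI', hE'⟩ := desub hI
      refine ⟨z', fun k => s (s' k), hI', ?_⟩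
      have := embm_trans hE' hE
      have hfun : (fun t => applyM (fun c => applyM gM (sigN n c)) (fibM t)) =
          (fun c => applyM gM (sigN (n+1) c)) := by
        funext t
        rw [show sigN (n+1) t = applyM (sigN n) (fibM t) from rfl, applyM_comp]
      rw [hfun] at this
      exact this
  -- set equality
  apply Set.eq_of_subset_of_subset
  · -- forward: factors of w are factors of g(f)
    rintro u hu
    rcases eq_or_ne u [] with rfl | hne0
    · exact ⟨0, List.nil_infix⟩
    rw [Set.mem_setOf_eq, factorBi_iff_seg] at hu
    obtain ⟨i, hi⟩ := hu
    set l := u.length with hl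
    have hl1 : 1 ≤ l := by
      have : u.length ≠ 0 := fun h => hne0 (List.eq_nil_of_length_eq_zero h)
      omega
    obtain ⟨z, s, hI, hE⟩ := tower (2*l)
    obtain ⟨j, hj1, hj2⟩ := exists_block hE.1 i
    have hblen : ∀ c, (l:ℤ) ≤ ((applyM gM (sigN (2*l) c)).length : ℤ) := by
      intro c
      rw [applyM_gM_length]
      have := sigN_len_ge l c
      push_cast
      omega
    have hchunk := embm_chunk hE 2 j
    have hs2 : s (j+2) = s j + ((applyM (fun c => applyM gM (sigN (2*l) c)) (seg z j 2)).length : ℤ) := by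
      have := hchunk.1
      rw [show j + ((2:ℕ):ℤ) = j + 2 by norm_num] at this
      exact this
    have h2 : s (j+1+1) = s (j+1) + ((applyM gM (sigN (2*l) (z (j+1)))).length : ℤ) :=
      (hE.2 (j+1)).1
    rw [show j+1+1 = j+2 by ring] at h2
    have hub : i + (l:ℤ) ≤ s (j+2) := by
      have h1 := hblen (z (j+1))
      omega
    have hinf : u <:+: applyM (fun c => applyM gM (sigN (2*l) c)) (seg z j 2) := by
      rw [hi]
      rw [← hchunk.2]
      apply seg_infix_seg w hj1
      omega
    rw [seg_two] at hinf
    have h11z := hI.1 j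
    -- [z j, z (j+1)] is an infix of fibIter 3
    have hzfib : [z j, z (j+1)] <:+: fibIter 3 := by
      cases hzj : z j <;> cases hzj1 : z (j+1)
      · show [false, false] <:+: fibIter 3
        decide
      · show [false, true] <:+: fibIter 3
        decide
      · show [true, false] <:+: fibIter 3
        decide
      · exact absurd ⟨hzj, hzj1⟩ h11z
    have heq : applyM (fun c => applyM gM (sigN (2*l) c)) [z j, z (j+1)] =
        applyM gM (applyM (sigN (2*l)) [z j, z (j+1)]) := by
      rw [applyM_comp]
    rw [heq] at hinf
    refine ⟨3 + 2*l, ?_⟩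
    calc u <:+: applyM gM (applyM (sigN (2*l)) [z j, z (j+1)]) := hinf
    _ <:+: applyM gM (fibIter (3 + 2*l)) := by
        rw [← applyM_sigN (2*l) 3]
        exact applyM_infix gM (applyM_infix (sigN (2*l)) hzfib)
  · -- backward: factors of g(f) are factors of w
    rintro u ⟨m, hm⟩
    obtain ⟨z, s, hI, hE⟩ := tower (m+1)
    have hpw := (hE.2 0).2
    have hseg := (eq_seg_of_pw hpw).symm
    have hpre : applyM gM (fibIter m) <+: applyM gM (sigN (m+1) (z 0)) :=
      applyM_prefix gM (fib_prefix_sigN m (z 0))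
    show FactorBi u w
    apply factorBi_of_infix_seg (i := s 0)
      (n := (applyM gM (sigN (m+1) (z 0))).length)
    rw [hseg]
    calc u <:+: applyM gM (fibIter m) := hm
    _ <:+: applyM gM (sigN (m+1) (z 0)) := hpre.isInfix

/-! ### Section F1: exponent bound gives no fourth powers -/

lemma noFP_of_hexp {w : ℤ → Bool}
    (hexp : ∀ u, FactorBi u w → u ≠ [] → exponent u < 4) : NoFP w := by
  intro i p hp
  by_contra hcon
  push_neg at hcon
  set u := seg w i (4*p) with hu
  have hul : u.length = 4*p := by rw [hu, seg_length]
  have hfb : FactorBi u w := factorBi_iff_seg.2 ⟨i, by rw [hul]⟩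
  have hpw : PW w u i := pw_of_eq_seg (by rw [hul])
  have hper : HasPeriod u p := by
    refine ⟨hp, fun j hj => ?_⟩
    rw [hul] at hj
    rw [← hpw j (by omega), ← hpw (j+p) (by omega)]
    have := hcon j (by omega)
    rw [this]
    congr 1
    push_cast
    ring
  have hne : {q : ℕ | HasPeriod u q}.Nonempty := ⟨p, hper⟩
  have hmem := Nat.sInf_mem hne
  have h1 : 1 ≤ sInf {q : ℕ | HasPeriod u q} := hmem.1
  have hle : sInf {q : ℕ | HasPeriod u q} ≤ p := Nat.sInf_le hper
  have hge : (4:ℝ) ≤ exponent u := by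
    set q := sInf {q : ℕ | HasPeriod u q} with hq
    have hq0 : (0:ℝ) < (q:ℝ) := by
      have : 0 < q := h1
      exact_mod_cast this
    rw [exponent, hul, ← hq]
    rw [le_div_iff₀ hq0]
    have : (q:ℝ) ≤ (p:ℝ) := by exact_mod_cast hle
    push_cast
    linarith
  have := hexp u hfb (by
    intro h
    rw [h] at hul
    simp at hul
    omega)
  linarith

/-! ### Section F2: a word avoiding the patterns cannot contain both 000 and 111 -/

lemma mix {w : ℤ → Bool} (hFP : NoFP w)
    (h0011 : ∀ i:ℤ, ¬(w i = false ∧ w (i+1) = false ∧ w (i+2) = true ∧ w (i+3) = true))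
    (h1100 : ∀ i:ℤ, ¬(w i = true ∧ w (i+1) = true ∧ w (i+2) = false ∧ w (i+3) = false))
    (h0110 : ∀ i:ℤ, ¬(w i = false ∧ w (i+1) = true ∧ w (i+2) = true ∧ w (i+3) = false))
    (h1001 : ∀ i:ℤ, ¬(w i = true ∧ w (i+1) = false ∧ w (i+2) = false ∧ w (i+3) = true))
    (h010101 : ∀ i:ℤ, ¬(w i = false ∧ w (i+1) = true ∧ w (i+2) = false ∧ w (i+3) = true ∧
        w (i+4) = false ∧ w (i+5) = true))
    (h101010 : ∀ i:ℤ, ¬(w i = true ∧ w (i+1) = false ∧ w (i+2) = true ∧ w (i+3) = false ∧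
        w (i+4) = true ∧ w (i+5) = false))
    (hA10 : ∀ i:ℤ, ¬(w i = false ∧ w (i+1) = false ∧ w (i+2) = false ∧ w (i+3) = true ∧
        w (i+4) = false ∧ w (i+5) = true ∧ w (i+6) = true ∧ w (i+7) = true ∧
        w (i+8) = false ∧ w (i+9) = true))
    (hB10 : ∀ i:ℤ, ¬(w i = true ∧ w (i+1) = false ∧ w (i+2) = true ∧ w (i+3) = true ∧
        w (i+4) = true ∧ w (i+5) = false ∧ w (i+6) = true ∧ w (i+7) = false ∧
        w (i+8) = false ∧ w (i+9) = false)) :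
    (∀ i:ℤ, ¬(w i = false ∧ w (i+1) = false ∧ w (i+2) = false)) ∨
    (∀ i:ℤ, ¬(w i = true ∧ w (i+1) = true ∧ w (i+2) = true)) := by
  classical
  have no1111 : ∀ i:ℤ, ¬(w i = true ∧ w (i+1) = true ∧ w (i+2) = true ∧ w (i+3) = true) := by
    rintro i ⟨a, b, c, d⟩
    obtain ⟨t, ht, hne⟩ := hFP i 1 (by omega)
    interval_cases t <;> push_cast at hne <;> apply hne
    · rw [show i + 0 + 1 = i + 1 by ring, show i + 0 = i by ring, a, b]
    · rw [show i + 1 + 1 = i + 2 by ring, b, c]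
    · rw [show i + 2 + 1 = i + 3 by ring, c, d]
  have no0000 : ∀ i:ℤ, ¬(w i = false ∧ w (i+1) = false ∧ w (i+2) = false ∧ w (i+3) = false) := by
    rintro i ⟨a, b, c, d⟩
    obtain ⟨t, ht, hne⟩ := hFP i 1 (by omega)
    interval_cases t <;> push_cast at hne <;> apply hne
    · rw [show i + 0 + 1 = i + 1 by ring, show i + 0 = i by ring, a, b]
    · rw [show i + 1 + 1 = i + 2 by ring, b, c]
    · rw [show i + 2 + 1 = i + 3 by ring, c, d]
  by_contra hcontra
  push_neg at hcontra
  obtain ⟨⟨iz, hz⟩, ⟨io, ho⟩⟩ := hcontra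
  set SP : ℕ → Prop := fun n =>
    ∃ i : ℤ, ((w i = false ∧ w (i+1) = false ∧ w (i+2) = false) ∧
              (w (i+(n:ℤ)) = true ∧ w (i+(n:ℤ)+1) = true ∧ w (i+(n:ℤ)+2) = true)) ∨
             ((w i = true ∧ w (i+1) = true ∧ w (i+2) = true) ∧
              (w (i+(n:ℤ)) = false ∧ w (i+(n:ℤ)+1) = false ∧ w (i+(n:ℤ)+2) = false))
    with hSPdef
  have hSP : ∃ n, SP n := by
    rcases le_total iz io with hle | hle
    · refine ⟨(io - iz).toNat, iz, Or.inl ⟨hz, ?_, ?_, ?_⟩⟩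
      · rw [show iz + (((io - iz).toNat:ℕ):ℤ) = io by omega]; exact ho.1
      · rw [show iz + (((io - iz).toNat:ℕ):ℤ) + 1 = io + 1 by omega]; exact ho.2.1
      · rw [show iz + (((io - iz).toNat:ℕ):ℤ) + 2 = io + 2 by omega]; exact ho.2.2
    · refine ⟨(iz - io).toNat, io, Or.inr ⟨ho, ?_, ?_, ?_⟩⟩
      · rw [show io + (((iz - io).toNat:ℕ):ℤ) = iz by omega]; exact hz.1
      · rw [show io + (((iz - io).toNat:ℕ):ℤ) + 1 = iz + 1 by omega]; exact hz.2.1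
      · rw [show io + (((iz - io).toNat:ℕ):ℤ) + 2 = iz + 2 by omega]; exact hz.2.2
  set n0 := sInf {n | SP n} with hn0
  have hmem : SP n0 := Nat.sInf_mem hSP
  have hminS : ∀ m, SP m → n0 ≤ m := fun m hm => Nat.sInf_le hm
  have hMZ : ∀ (i' : ℤ) (m : ℕ), m < n0 →
      (w i' = false ∧ w (i'+1) = false ∧ w (i'+2) = false) →
      (w (i'+(m:ℤ)) = true ∧ w (i'+(m:ℤ)+1) = true ∧ w (i'+(m:ℤ)+2) = true) → False := by
    intro i' m hm hz' ho'
    have := hminS m ⟨i', Or.inl ⟨hz', ho'⟩⟩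
    omega
  have hMO : ∀ (i' : ℤ) (m : ℕ), m < n0 →
      (w i' = true ∧ w (i'+1) = true ∧ w (i'+2) = true) →
      (w (i'+(m:ℤ)) = false ∧ w (i'+(m:ℤ)+1) = false ∧ w (i'+(m:ℤ)+2) = false) → False := by
    intro i' m hm ho' hz'
    have := hminS m ⟨i', Or.inr ⟨ho', hz'⟩⟩
    omega
  obtain ⟨i, hcase⟩ := hmem
  rcases hcase with ⟨⟨z1, z2, z3⟩, ⟨o1, o2, o3⟩⟩ | ⟨⟨o1, o2, o3⟩, ⟨z1, z2, z3⟩⟩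
  · -- case 1: 000 at i, 111 at i + n0
    have h3 : 3 ≤ n0 := by
      by_contra hlt
      push_neg at hlt
      have hv : w (i + (n0:ℤ)) = false := by
        rcases show n0 = 0 ∨ n0 = 1 ∨ n0 = 2 by omega with h|h|h <;> rw [h]
        · simpa using z1
        · simpa using z2
        · simpa using z3
      rw [o1] at hv
      simp at hv
    have A : ∀ m : ℕ, 2 ≤ m → m < n0 → w (i + (m:ℤ)) = (if m % 2 = 1 then true else false) := by
      intro m
      induction m using Nat.strong_induction_on with
      | _ m ih =>
        intro h2m hmn
        rcases show m = 2 ∨ m = 3 ∨ 4 ≤ m by omega with hm | hm | hm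
        · subst hm
          rw [if_neg (by norm_num)]
          simpa using z3
        · subst hm
          rw [if_pos (by norm_num)]
          cases hw : w (i + (3:ℕ)) with
          | false =>
            exfalso
            apply hMZ (i+1) (n0-1) (by omega)
            · exact ⟨z2, by rw [show i+1+1 = i+2 by ring]; exact z3,
                by rw [show i+1+2 = i + ((3:ℕ):ℤ) by push_cast; ring]; exact hw⟩
            · refine ⟨?_, ?_, ?_⟩
              · rw [show i + 1 + ((n0-1:ℕ):ℤ) = i + (n0:ℤ) by omega]; exact o1
              · rw [show i + 1 + ((n0-1:ℕ):ℤ) + 1 = i + (n0:ℤ) + 1 by omega]; exact o2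
              · rw [show i + 1 + ((n0-1:ℕ):ℤ) + 2 = i + (n0:ℤ) + 2 by omega]; exact o3
          | true => rfl
        · have hm1 := ih (m-1) (by omega) (by omega) (by omega)
          have hm2 := ih (m-2) (by omega) (by omega) (by omega)
          rw [show (i + ((m-1:ℕ):ℤ)) = i + (m:ℤ) - 1 by omega] at hm1
          rw [show (i + ((m-2:ℕ):ℤ)) = i + (m:ℤ) - 2 by omega] at hm2
          rcases Nat.even_or_odd m with ⟨r, hr⟩ | ⟨r, hr⟩
          · rw [if_pos (by omega)] at hm1
            rw [if_neg (by omega)] at hm2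
            rw [if_neg (by omega)]
            cases hw : w (i + (m:ℤ)) with
            | false => rfl
            | true =>
              exfalso
              cases hw1 : w (i + (m:ℤ) + 1) with
              | false =>
                exact h0110 (i + (m:ℤ) - 2) ⟨hm2,
                  by rw [show i+(m:ℤ)-2+1 = i+(m:ℤ)-1 by ring]; exact hm1,
                  by rw [show i+(m:ℤ)-2+2 = i+(m:ℤ) by ring]; exact hw,
                  by rw [show i+(m:ℤ)-2+3 = i+(m:ℤ)+1 by ring]; exact hw1⟩
              | true =>
                apply hMZ i (m-1) (by omega) ⟨z1, z2, z3⟩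
                refine ⟨?_, ?_, ?_⟩
                · rw [show i + ((m-1:ℕ):ℤ) = i+(m:ℤ)-1 by omega]; exact hm1
                · rw [show i + ((m-1:ℕ):ℤ)+1 = i+(m:ℤ) by omega]; exact hw
                · rw [show i + ((m-1:ℕ):ℤ)+2 = i+(m:ℤ)+1 by omega]; exact hw1
          · rw [if_neg (by omega)] at hm1
            rw [if_pos (by omega)] at hm2
            rw [if_pos (by omega)]
            cases hw : w (i + (m:ℤ)) with
            | true => rfl
            | false =>
              exfalso
              cases hw1 : w (i + (m:ℤ) + 1) with
              | false =>
                apply hMZ (i+(m:ℤ)-1) (n0-(m-1)) (by omega)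
                · exact ⟨hm1, by rw [show i+(m:ℤ)-1+1 = i+(m:ℤ) by ring]; exact hw,
                    by rw [show i+(m:ℤ)-1+2 = i+(m:ℤ)+1 by ring]; exact hw1⟩
                · refine ⟨?_, ?_, ?_⟩
                  · rw [show i+(m:ℤ)-1 + ((n0-(m-1):ℕ):ℤ) = i + (n0:ℤ) by omega]; exact o1
                  · rw [show i+(m:ℤ)-1 + ((n0-(m-1):ℕ):ℤ) + 1 = i + (n0:ℤ) + 1 by omega]; exact o2
                  · rw [show i+(m:ℤ)-1 + ((n0-(m-1):ℕ):ℤ) + 2 = i + (n0:ℤ) + 2 by omega]; exact o3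
              | true =>
                exact h1001 (i + (m:ℤ) - 2) ⟨hm2,
                  by rw [show i+(m:ℤ)-2+1 = i+(m:ℤ)-1 by ring]; exact hm1,
                  by rw [show i+(m:ℤ)-2+2 = i+(m:ℤ) by ring]; exact hw,
                  by rw [show i+(m:ℤ)-2+3 = i+(m:ℤ)+1 by ring]; exact hw1⟩
    rcases show n0 = 3 ∨ n0 = 4 ∨ n0 = 5 ∨ n0 = 6 ∨ n0 = 7 ∨ n0 = 8 ∨ 9 ≤ n0 by omega
      with h|h|h|h|h|h|h
    · rw [show (n0:ℤ) = 3 by omega] at o1 o2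
      exact h0011 (i+1) ⟨z2, by rw [show i+1+1 = i+2 by ring]; exact z3,
        by rw [show i+1+2 = i+3 by ring]; exact o1,
        by rw [show i+1+3 = i+3+1 by ring]; exact o2⟩
    · rw [show (n0:ℤ) = 4 by omega] at o1 o2 o3
      have A3 : w (i+3) = true := by
        have := A 3 (by omega) (by omega)
        rw [if_pos (by norm_num)] at this
        push_cast at this
        exact this
      exact no1111 (i+3) ⟨A3, by rw [show i+3+1 = i+4 by ring]; exact o1,
        by rw [show i+3+2 = i+4+1 by ring]; exact o2,
        by rw [show i+3+3 = i+4+2 by ring]; exact o3⟩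
    · rw [show (n0:ℤ) = 5 by omega] at o1 o2 o3
      have A3 : w (i+3) = true := by
        have := A 3 (by omega) (by omega)
        rw [if_pos (by norm_num)] at this
        push_cast at this
        exact this
      have A4 : w (i+4) = false := by
        have := A 4 (by omega) (by omega)
        rw [if_neg (by norm_num)] at this
        push_cast at this
        exact this
      cases h8 : w (i+8) with
      | true =>
        exact no1111 (i+5) ⟨o1, by rw [show i+5+1 = i+5+1 by ring]; exact o2,
          o3, by rw [show i+5+3 = i+8 by ring]; exact h8⟩
      | false =>
        cases h9 : w (i+9) with
        | true =>
          exact hA10 i ⟨z1, z2, z3, A3, A4, o1,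
            by rw [show i+6 = i+5+1 by ring]; exact o2,
            by rw [show i+7 = i+5+2 by ring]; exact o3, h8, h9⟩
        | false =>
          exact h1100 (i+6) ⟨by rw [show i+6 = i+5+1 by ring]; exact o2,
            by rw [show i+6+1 = i+5+2 by ring]; exact o3,
            by rw [show i+6+2 = i+8 by ring]; exact h8,
            by rw [show i+6+3 = i+9 by ring]; exact h9⟩
    · rw [show (n0:ℤ) = 6 by omega] at o1 o2 o3
      have A5 : w (i+5) = true := by
        have := A 5 (by omega) (by omega)
        rw [if_pos (by norm_num)] at this
        push_cast at this
        exact this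
      exact no1111 (i+5) ⟨A5, by rw [show i+5+1 = i+6 by ring]; exact o1,
        by rw [show i+5+2 = i+6+1 by ring]; exact o2,
        by rw [show i+5+3 = i+6+2 by ring]; exact o3⟩
    · rw [show (n0:ℤ) = 7 by omega] at o1
      have A3 : w (i+3) = true := by
        have := A 3 (by omega) (by omega); rw [if_pos (by norm_num)] at this
        push_cast at this; exact this
      have A4 : w (i+4) = false := by
        have := A 4 (by omega) (by omega); rw [if_neg (by norm_num)] at this
        push_cast at this; exact this
      have A5 : w (i+5) = true := by
        have := A 5 (by omega) (by omega); rw [if_pos (by norm_num)] at this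
        push_cast at this; exact this
      have A6 : w (i+6) = false := by
        have := A 6 (by omega) (by omega); rw [if_neg (by norm_num)] at this
        push_cast at this; exact this
      exact h010101 (i+2) ⟨z3, by rw [show i+2+1 = i+3 by ring]; exact A3,
        by rw [show i+2+2 = i+4 by ring]; exact A4,
        by rw [show i+2+3 = i+5 by ring]; exact A5,
        by rw [show i+2+4 = i+6 by ring]; exact A6,
        by rw [show i+2+5 = i+7 by ring]; exact o1⟩
    · have A3 : w (i+3) = true := by
        have := A 3 (by omega) (by omega); rw [if_pos (by norm_num)] at this
        push_cast at this; exact this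
      have A4 : w (i+4) = false := by
        have := A 4 (by omega) (by omega); rw [if_neg (by norm_num)] at this
        push_cast at this; exact this
      have A5 : w (i+5) = true := by
        have := A 5 (by omega) (by omega); rw [if_pos (by norm_num)] at this
        push_cast at this; exact this
      have A6 : w (i+6) = false := by
        have := A 6 (by omega) (by omega); rw [if_neg (by norm_num)] at this
        push_cast at this; exact this
      have A7 : w (i+7) = true := by
        have := A 7 (by omega) (by omega); rw [if_pos (by norm_num)] at this
        push_cast at this; exact this
      exact h010101 (i+2) ⟨z3, by rw [show i+2+1 = i+3 by ring]; exact A3,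
        by rw [show i+2+2 = i+4 by ring]; exact A4,
        by rw [show i+2+3 = i+5 by ring]; exact A5,
        by rw [show i+2+4 = i+6 by ring]; exact A6,
        by rw [show i+2+5 = i+7 by ring]; exact A7⟩
    · have A3 : w (i+3) = true := by
        have := A 3 (by omega) (by omega); rw [if_pos (by norm_num)] at this
        push_cast at this; exact this
      have A4 : w (i+4) = false := by
        have := A 4 (by omega) (by omega); rw [if_neg (by norm_num)] at this
        push_cast at this; exact this
      have A5 : w (i+5) = true := by
        have := A 5 (by omega) (by omega); rw [if_pos (by norm_num)] at this
        push_cast at this; exact this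
      have A6 : w (i+6) = false := by
        have := A 6 (by omega) (by omega); rw [if_neg (by norm_num)] at this
        push_cast at this; exact this
      have A7 : w (i+7) = true := by
        have := A 7 (by omega) (by omega); rw [if_pos (by norm_num)] at this
        push_cast at this; exact this
      have A8 : w (i+8) = false := by
        have := A 8 (by omega) (by omega); rw [if_neg (by norm_num)] at this
        push_cast at this; exact this
      exact h101010 (i+3) ⟨A3, by rw [show i+3+1 = i+4 by ring]; exact A4,
        by rw [show i+3+2 = i+5 by ring]; exact A5,
        by rw [show i+3+3 = i+6 by ring]; exact A6,
        by rw [show i+3+4 = i+7 by ring]; exact A7,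
        by rw [show i+3+5 = i+8 by ring]; exact A8⟩
  · -- case 2: 111 at i, 000 at i + n0
    have h3 : 3 ≤ n0 := by
      by_contra hlt
      push_neg at hlt
      have hv : w (i + (n0:ℤ)) = true := by
        rcases show n0 = 0 ∨ n0 = 1 ∨ n0 = 2 by omega with h|h|h <;> rw [h]
        · simpa using o1
        · simpa using o2
        · simpa using o3
      rw [z1] at hv
      simp at hv
    have A : ∀ m : ℕ, 2 ≤ m → m < n0 → w (i + (m:ℤ)) = (if m % 2 = 1 then false else true) := by
      intro m
      induction m using Nat.strong_induction_on with
      | _ m ih =>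
        intro h2m hmn
        rcases show m = 2 ∨ m = 3 ∨ 4 ≤ m by omega with hm | hm | hm
        · subst hm
          rw [if_neg (by norm_num)]
          simpa using o3
        · subst hm
          rw [if_pos (by norm_num)]
          cases hw : w (i + (3:ℕ)) with
          | true =>
            exfalso
            apply hMO (i+1) (n0-1) (by omega)
            · exact ⟨o2, by rw [show i+1+1 = i+2 by ring]; exact o3,
                by rw [show i+1+2 = i + ((3:ℕ):ℤ) by push_cast; ring]; exact hw⟩
            · refine ⟨?_, ?_, ?_⟩
              · rw [show i + 1 + ((n0-1:ℕ):ℤ) = i + (n0:ℤ) by omega]; exact z1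
              · rw [show i + 1 + ((n0-1:ℕ):ℤ) + 1 = i + (n0:ℤ) + 1 by omega]; exact z2
              · rw [show i + 1 + ((n0-1:ℕ):ℤ) + 2 = i + (n0:ℤ) + 2 by omega]; exact z3
          | false => rfl
        · have hm1 := ih (m-1) (by omega) (by omega) (by omega)
          have hm2 := ih (m-2) (by omega) (by omega) (by omega)
          rw [show (i + ((m-1:ℕ):ℤ)) = i + (m:ℤ) - 1 by omega] at hm1
          rw [show (i + ((m-2:ℕ):ℤ)) = i + (m:ℤ) - 2 by omega] at hm2
          rcases Nat.even_or_odd m with ⟨r, hr⟩ | ⟨r, hr⟩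
          · rw [if_pos (by omega)] at hm1
            rw [if_neg (by omega)] at hm2
            rw [if_neg (by omega)]
            cases hw : w (i + (m:ℤ)) with
            | true => rfl
            | false =>
              exfalso
              cases hw1 : w (i + (m:ℤ) + 1) with
              | true =>
                exact h1001 (i + (m:ℤ) - 2) ⟨hm2,
                  by rw [show i+(m:ℤ)-2+1 = i+(m:ℤ)-1 by ring]; exact hm1,
                  by rw [show i+(m:ℤ)-2+2 = i+(m:ℤ) by ring]; exact hw,
                  by rw [show i+(m:ℤ)-2+3 = i+(m:ℤ)+1 by ring]; exact hw1⟩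
              | false =>
                apply hMO i (m-1) (by omega) ⟨o1, o2, o3⟩
                refine ⟨?_, ?_, ?_⟩
                · rw [show i + ((m-1:ℕ):ℤ) = i+(m:ℤ)-1 by omega]; exact hm1
                · rw [show i + ((m-1:ℕ):ℤ)+1 = i+(m:ℤ) by omega]; exact hw
                · rw [show i + ((m-1:ℕ):ℤ)+2 = i+(m:ℤ)+1 by omega]; exact hw1
          · rw [if_neg (by omega)] at hm1
            rw [if_pos (by omega)] at hm2
            rw [if_pos (by omega)]
            cases hw : w (i + (m:ℤ)) with
            | false => rfl
            | true =>
              exfalso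
              cases hw1 : w (i + (m:ℤ) + 1) with
              | true =>
                apply hMO (i+(m:ℤ)-1) (n0-(m-1)) (by omega)
                · exact ⟨hm1, by rw [show i+(m:ℤ)-1+1 = i+(m:ℤ) by ring]; exact hw,
                    by rw [show i+(m:ℤ)-1+2 = i+(m:ℤ)+1 by ring]; exact hw1⟩
                · refine ⟨?_, ?_, ?_⟩
                  · rw [show i+(m:ℤ)-1 + ((n0-(m-1):ℕ):ℤ) = i + (n0:ℤ) by omega]; exact z1
                  · rw [show i+(m:ℤ)-1 + ((n0-(m-1):ℕ):ℤ) + 1 = i + (n0:ℤ) + 1 by omega]; exact z2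
                  · rw [show i+(m:ℤ)-1 + ((n0-(m-1):ℕ):ℤ) + 2 = i + (n0:ℤ) + 2 by omega]; exact z3
              | false =>
                exact h0110 (i + (m:ℤ) - 2) ⟨hm2,
                  by rw [show i+(m:ℤ)-2+1 = i+(m:ℤ)-1 by ring]; exact hm1,
                  by rw [show i+(m:ℤ)-2+2 = i+(m:ℤ) by ring]; exact hw,
                  by rw [show i+(m:ℤ)-2+3 = i+(m:ℤ)+1 by ring]; exact hw1⟩
    rcases show n0 = 3 ∨ n0 = 4 ∨ n0 = 5 ∨ n0 = 6 ∨ n0 = 7 ∨ n0 = 8 ∨ 9 ≤ n0 by omega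
      with h|h|h|h|h|h|h
    · rw [show (n0:ℤ) = 3 by omega] at z1 z2
      exact h1100 (i+1) ⟨o2, by rw [show i+1+1 = i+2 by ring]; exact o3,
        by rw [show i+1+2 = i+3 by ring]; exact z1,
        by rw [show i+1+3 = i+3+1 by ring]; exact z2⟩
    · rw [show (n0:ℤ) = 4 by omega] at z1 z2 z3
      have A3 : w (i+3) = false := by
        have := A 3 (by omega) (by omega); rw [if_pos (by norm_num)] at this
        push_cast at this; exact this
      exact no0000 (i+3) ⟨A3, by rw [show i+3+1 = i+4 by ring]; exact z1,
        by rw [show i+3+2 = i+4+1 by ring]; exact z2,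
        by rw [show i+3+3 = i+4+2 by ring]; exact z3⟩
    · rw [show (n0:ℤ) = 5 by omega] at z1 z2 z3
      have A3 : w (i+3) = false := by
        have := A 3 (by omega) (by omega); rw [if_pos (by norm_num)] at this
        push_cast at this; exact this
      have A4 : w (i+4) = true := by
        have := A 4 (by omega) (by omega); rw [if_neg (by norm_num)] at this
        push_cast at this; exact this
      have hm1 : w (i-1) = false := by
        cases hm1' : w (i-1) with
        | false => rfl
        | true =>
          exact absurd ⟨hm1', by rw [show i-1+1 = i by ring]; exact o1,
            by rw [show i-1+2 = i+1 by ring]; exact o2,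
            by rw [show i-1+3 = i+2 by ring]; exact o3⟩ (no1111 (i-1))
      cases hm2 : w (i-2) with
      | true =>
        exact hB10 (i-2) ⟨hm2, by rw [show i-2+1 = i-1 by ring]; exact hm1,
          by rw [show i-2+2 = i by ring]; exact o1,
          by rw [show i-2+3 = i+1 by ring]; exact o2,
          by rw [show i-2+4 = i+2 by ring]; exact o3,
          by rw [show i-2+5 = i+3 by ring]; exact A3,
          by rw [show i-2+6 = i+4 by ring]; exact A4,
          by rw [show i-2+7 = i+5 by ring]; exact z1,
          by rw [show i-2+8 = i+5+1 by ring]; exact z2,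
          by rw [show i-2+9 = i+5+2 by ring]; exact z3⟩
      | false =>
        exact h0011 (i-2) ⟨hm2, by rw [show i-2+1 = i-1 by ring]; exact hm1,
          by rw [show i-2+2 = i by ring]; exact o1,
          by rw [show i-2+3 = i+1 by ring]; exact o2⟩
    · rw [show (n0:ℤ) = 6 by omega] at z1 z2 z3
      have A5 : w (i+5) = false := by
        have := A 5 (by omega) (by omega); rw [if_pos (by norm_num)] at this
        push_cast at this; exact this
      exact no0000 (i+5) ⟨A5, by rw [show i+5+1 = i+6 by ring]; exact z1,
        by rw [show i+5+2 = i+6+1 by ring]; exact z2,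
        by rw [show i+5+3 = i+6+2 by ring]; exact z3⟩
    · rw [show (n0:ℤ) = 7 by omega] at z1
      have A3 : w (i+3) = false := by
        have := A 3 (by omega) (by omega); rw [if_pos (by norm_num)] at this
        push_cast at this; exact this
      have A4 : w (i+4) = true := by
        have := A 4 (by omega) (by omega); rw [if_neg (by norm_num)] at this
        push_cast at this; exact this
      have A5 : w (i+5) = false := by
        have := A 5 (by omega) (by omega); rw [if_pos (by norm_num)] at this
        push_cast at this; exact this
      have A6 : w (i+6) = true := by
        have := A 6 (by omega) (by omega); rw [if_neg (by norm_num)] at this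
        push_cast at this; exact this
      exact h101010 (i+2) ⟨o3, by rw [show i+2+1 = i+3 by ring]; exact A3,
        by rw [show i+2+2 = i+4 by ring]; exact A4,
        by rw [show i+2+3 = i+5 by ring]; exact A5,
        by rw [show i+2+4 = i+6 by ring]; exact A6,
        by rw [show i+2+5 = i+7 by ring]; exact z1⟩
    · have A3 : w (i+3) = false := by
        have := A 3 (by omega) (by omega); rw [if_pos (by norm_num)] at this
        push_cast at this; exact this
      have A4 : w (i+4) = true := by
        have := A 4 (by omega) (by omega); rw [if_neg (by norm_num)] at this
        push_cast at this; exact this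
      have A5 : w (i+5) = false := by
        have := A 5 (by omega) (by omega); rw [if_pos (by norm_num)] at this
        push_cast at this; exact this
      have A6 : w (i+6) = true := by
        have := A 6 (by omega) (by omega); rw [if_neg (by norm_num)] at this
        push_cast at this; exact this
      have A7 : w (i+7) = false := by
        have := A 7 (by omega) (by omega); rw [if_pos (by norm_num)] at this
        push_cast at this; exact this
      exact h101010 (i+2) ⟨o3, by rw [show i+2+1 = i+3 by ring]; exact A3,
        by rw [show i+2+2 = i+4 by ring]; exact A4,
        by rw [show i+2+3 = i+5 by ring]; exact A5,
        by rw [show i+2+4 = i+6 by ring]; exact A6,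
        by rw [show i+2+5 = i+7 by ring]; exact A7⟩
    · have A3 : w (i+3) = false := by
        have := A 3 (by omega) (by omega); rw [if_pos (by norm_num)] at this
        push_cast at this; exact this
      have A4 : w (i+4) = true := by
        have := A 4 (by omega) (by omega); rw [if_neg (by norm_num)] at this
        push_cast at this; exact this
      have A5 : w (i+5) = false := by
        have := A 5 (by omega) (by omega); rw [if_pos (by norm_num)] at this
        push_cast at this; exact this
      have A6 : w (i+6) = true := by
        have := A 6 (by omega) (by omega); rw [if_neg (by norm_num)] at this
        push_cast at this; exact this
      have A7 : w (i+7) = false := by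
        have := A 7 (by omega) (by omega); rw [if_pos (by norm_num)] at this
        push_cast at this; exact this
      have A8 : w (i+8) = true := by
        have := A 8 (by omega) (by omega); rw [if_neg (by norm_num)] at this
        push_cast at this; exact this
      exact h010101 (i+3) ⟨A3, by rw [show i+3+1 = i+4 by ring]; exact A4,
        by rw [show i+3+2 = i+5 by ring]; exact A5,
        by rw [show i+3+3 = i+6 by ring]; exact A6,
        by rw [show i+3+4 = i+7 by ring]; exact A7,
        by rw [show i+3+5 = i+8 by ring]; exact A8⟩

/-! ### Final assembly -/

lemma notb_f {b : Bool} (h : (!b) = false) : b = true := by cases b <;> simp_all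
lemma notb_t {b : Bool} (h : (!b) = true) : b = false := by cases b <;> simp_all

/-- every bi-infinite binary word with no factor of exponent ≥ 4 that
avoids every word of F has the same set of finite factors as g(f) or as the
complement of g(f). -/
theorem stmt_4 (w : ℤ → Bool)
    (hexp : ∀ u, FactorBi u w → u ≠ [] → exponent u < 4)
    (hF : ∀ f ∈ Fset, ¬ FactorBi f w) :
    {u | FactorBi u w} = {u | GFibFactor u} ∨
    {u | FactorBi u w} = {u | GFibFactor (comp u)} := by
  classical
  have hFP : NoFP w := noFP_of_hexp hexp
  have mk : ∀ v ∈ Fset, ∀ i, ¬ PW w v i := by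
    intro v hv i hpw
    exact hF v hv (factorBi_iff_pw.2 ⟨i, hpw⟩)
  have h0011 : ∀ i:ℤ, ¬(w i = false ∧ w (i+1) = false ∧ w (i+2) = true ∧ w (i+3) = true) := by
    rintro i ⟨a,b,c,d⟩
    refine mk [false,false,true,true] (by simp [Fset]) i ?_
    intro j hj
    simp only [List.length_cons, List.length_nil] at hj
    interval_cases j
    · simpa using a
    · simpa using b
    · simpa using c
    · simpa using d
  have h1100 : ∀ i:ℤ, ¬(w i = true ∧ w (i+1) = true ∧ w (i+2) = false ∧ w (i+3) = false) := by
    rintro i ⟨a,b,c,d⟩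
    refine mk [true,true,false,false] (by simp [Fset]) i ?_
    intro j hj
    simp only [List.length_cons, List.length_nil] at hj
    interval_cases j
    · simpa using a
    · simpa using b
    · simpa using c
    · simpa using d
  have h0110 : ∀ i:ℤ, ¬(w i = false ∧ w (i+1) = true ∧ w (i+2) = true ∧ w (i+3) = false) := by
    rintro i ⟨a,b,c,d⟩
    refine mk [false,true,true,false] (by simp [Fset]) i ?_
    intro j hj
    simp only [List.length_cons, List.length_nil] at hj
    interval_cases j
    · simpa using a
    · simpa using b
    · simpa using c
    · simpa using d
  have h1001 : ∀ i:ℤ, ¬(w i = true ∧ w (i+1) = false ∧ w (i+2) = false ∧ w (i+3) = true) := by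
    rintro i ⟨a,b,c,d⟩
    refine mk [true,false,false,true] (by simp [Fset]) i ?_
    intro j hj
    simp only [List.length_cons, List.length_nil] at hj
    interval_cases j
    · simpa using a
    · simpa using b
    · simpa using c
    · simpa using d
  have h010101 : ∀ i:ℤ, ¬(w i = false ∧ w (i+1) = true ∧ w (i+2) = false ∧ w (i+3) = true ∧
      w (i+4) = false ∧ w (i+5) = true) := by
    rintro i ⟨a,b,c,d,e,f⟩
    refine mk [false,true,false,true,false,true] (by simp [Fset]) i ?_
    intro j hj
    simp only [List.length_cons, List.length_nil] at hj
    interval_cases j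
    · simpa using a
    · simpa using b
    · simpa using c
    · simpa using d
    · simpa using e
    · simpa using f
  have h101010 : ∀ i:ℤ, ¬(w i = true ∧ w (i+1) = false ∧ w (i+2) = true ∧ w (i+3) = false ∧
      w (i+4) = true ∧ w (i+5) = false) := by
    rintro i ⟨a,b,c,d,e,f⟩
    refine mk [true,false,true,false,true,false] (by simp [Fset]) i ?_
    intro j hj
    simp only [List.length_cons, List.length_nil] at hj
    interval_cases j
    · simpa using a
    · simpa using b
    · simpa using c
    · simpa using d
    · simpa using e
    · simpa using f
  have hA10 : ∀ i:ℤ, ¬(w i = false ∧ w (i+1) = false ∧ w (i+2) = false ∧ w (i+3) = true ∧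
      w (i+4) = false ∧ w (i+5) = true ∧ w (i+6) = true ∧ w (i+7) = true ∧
      w (i+8) = false ∧ w (i+9) = true) := by
    rintro i ⟨a,b,c,d,e,f,g,h,a9,a10⟩
    refine mk [false,false,false,true,false,true,true,true,false,true] (by simp [Fset]) i ?_
    intro j hj
    simp only [List.length_cons, List.length_nil] at hj
    interval_cases j
    · simpa using a
    · simpa using b
    · simpa using c
    · simpa using d
    · simpa using e
    · simpa using f
    · simpa using g
    · simpa using h
    · simpa using a9
    · simpa using a10
  have hB10 : ∀ i:ℤ, ¬(w i = true ∧ w (i+1) = false ∧ w (i+2) = true ∧ w (i+3) = true ∧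
      w (i+4) = true ∧ w (i+5) = false ∧ w (i+6) = true ∧ w (i+7) = false ∧
      w (i+8) = false ∧ w (i+9) = false) := by
    rintro i ⟨a,b,c,d,e,f,g,h,a9,a10⟩
    refine mk [true,false,true,true,true,false,true,false,false,false] (by simp [Fset]) i ?_
    intro j hj
    simp only [List.length_cons, List.length_nil] at hj
    interval_cases j
    · simpa using a
    · simpa using b
    · simpa using c
    · simpa using d
    · simpa using e
    · simpa using f
    · simpa using g
    · simpa using h
    · simpa using a9
    · simpa using a10
  have h15T : ∀ i:ℤ, ¬(w i = true ∧ w (i+1) = false ∧ w (i+2) = true ∧ w (i+3) = true ∧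
      w (i+4) = true ∧ w (i+5) = false ∧ w (i+6) = true ∧ w (i+7) = true ∧ w (i+8) = true ∧
      w (i+9) = false ∧ w (i+10) = true ∧ w (i+11) = true ∧ w (i+12) = true ∧
      w (i+13) = false ∧ w (i+14) = true) := by
    rintro i ⟨a1,a2,a3,a4,a5,a6,a7,a8,a9,a10,a11,a12,a13,a14,a15⟩
    refine mk [true,false,true,true,true,false,true,true,true,false,true,true,true,false,true]
      (by simp [Fset]) i ?_
    intro j hj
    simp only [List.length_cons, List.length_nil] at hj
    interval_cases j
    · simpa using a1
    · simpa using a2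
    · simpa using a3
    · simpa using a4
    · simpa using a5
    · simpa using a6
    · simpa using a7
    · simpa using a8
    · simpa using a9
    · simpa using a10
    · simpa using a11
    · simpa using a12
    · simpa using a13
    · simpa using a14
    · simpa using a15
  have h15F : ∀ i:ℤ, ¬(w i = false ∧ w (i+1) = true ∧ w (i+2) = false ∧ w (i+3) = false ∧
      w (i+4) = false ∧ w (i+5) = true ∧ w (i+6) = false ∧ w (i+7) = false ∧ w (i+8) = false ∧
      w (i+9) = true ∧ w (i+10) = false ∧ w (i+11) = false ∧ w (i+12) = false ∧
      w (i+13) = true ∧ w (i+14) = false) := by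
    rintro i ⟨a1,a2,a3,a4,a5,a6,a7,a8,a9,a10,a11,a12,a13,a14,a15⟩
    refine mk [false,true,false,false,false,true,false,false,false,true,false,false,false,true,false]
      (by simp [Fset]) i ?_
    intro j hj
    simp only [List.length_cons, List.length_nil] at hj
    interval_cases j
    · simpa using a1
    · simpa using a2
    · simpa using a3
    · simpa using a4
    · simpa using a5
    · simpa using a6
    · simpa using a7
    · simpa using a8
    · simpa using a9
    · simpa using a10
    · simpa using a11
    · simpa using a12
    · simpa using a13
    · simpa using a14
    · simpa using a15
  rcases mix hFP h0011 h1100 h0110 h1001 h010101 h101010 hA10 hB10 with hno000 | hno111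
  · exact Or.inl (good_case hFP h0110 h1001 h010101 h15T hno000)
  · right
    set w' : ℤ → Bool := fun t => ! w t with hw'def
    have hFP' : NoFP w' := by
      intro i p hp
      obtain ⟨t, ht, hne⟩ := hFP i p hp
      refine ⟨t, ht, ?_⟩
      show (! w (i + (t:ℤ))) ≠ (! w (i + (t:ℤ) + (p:ℤ)))
      simp [hne]
    have h0110' : ∀ i:ℤ, ¬(w' i = false ∧ w' (i+1) = true ∧ w' (i+2) = true ∧ w' (i+3) = false) :=
      fun i ⟨a,b,c,d⟩ => h1001 i ⟨notb_f a, notb_t b, notb_t c, notb_f d⟩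
    have h1001' : ∀ i:ℤ, ¬(w' i = true ∧ w' (i+1) = false ∧ w' (i+2) = false ∧ w' (i+3) = true) :=
      fun i ⟨a,b,c,d⟩ => h0110 i ⟨notb_t a, notb_f b, notb_f c, notb_t d⟩
    have h010101' : ∀ i:ℤ, ¬(w' i = false ∧ w' (i+1) = true ∧ w' (i+2) = false ∧ w' (i+3) = true ∧
        w' (i+4) = false ∧ w' (i+5) = true) :=
      fun i ⟨a,b,c,d,e,f⟩ => h101010 i ⟨notb_f a, notb_t b, notb_f c, notb_t d, notb_f e, notb_t f⟩
    have h15T' : ∀ i:ℤ, ¬(w' i = true ∧ w' (i+1) = false ∧ w' (i+2) = true ∧ w' (i+3) = true ∧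
        w' (i+4) = true ∧ w' (i+5) = false ∧ w' (i+6) = true ∧ w' (i+7) = true ∧ w' (i+8) = true ∧
        w' (i+9) = false ∧ w' (i+10) = true ∧ w' (i+11) = true ∧ w' (i+12) = true ∧
        w' (i+13) = false ∧ w' (i+14) = true) :=
      fun i ⟨a1,a2,a3,a4,a5,a6,a7,a8,a9,a10,a11,a12,a13,a14,a15⟩ => h15F i
        ⟨notb_t a1, notb_f a2, notb_t a3, notb_t a4, notb_t a5, notb_f a6, notb_t a7,
         notb_t a8, notb_t a9, notb_f a10, notb_t a11, notb_t a12, notb_t a13, notb_f a14,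
         notb_t a15⟩
    have h000' : ∀ i:ℤ, ¬(w' i = false ∧ w' (i+1) = false ∧ w' (i+2) = false) :=
      fun i ⟨a,b,c⟩ => hno111 i ⟨notb_f a, notb_f b, notb_f c⟩
    have hgood := good_case hFP' h0110' h1001' h010101' h15T' h000'
    ext u
    simp only [Set.mem_setOf_eq]
    have hcomp : FactorBi u w ↔ FactorBi (comp u) w' := by
      have hfun : (fun t => !(w' t)) = w := funext fun t => Bool.not_not _
      rw [← hfun]
      exact factorBi_comp_iff
    rw [hcomp]
    exact Set.ext_iff.1 hgood (comp u)
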